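/- Let G be a topological group whose underlying space is a Cantor set. Then G admits a closed game subset A (i.e. a closed set with A ∩ A⁻¹ = {e} and A ∪ A⁻¹ = G) if and only if G has no element of order 2. -/

import Mathlib

open Set Filter Topology

section Aux

variable {G : Type*} [Group G] [TopologicalSpace G] [IsTopologicalGroup G]

lemma IsClopen.inv' {s : Set G} (hs : IsClopen s) : IsClopen s⁻¹ :=
  ⟨hs.1.inv, hs.2.inv⟩

/-- Greedy construction: combine a list of "self-disjoint-under-inversion" clopen sets
into a single one covering their union up to inversion. -/
private def build : List (Set G) → Set G
  | [] => ∅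
  | W :: l => build l ∪ (W \ (build l ∪ (build l)⁻¹))

private lemma build_spec (l : List (Set G))
    (h : ∀ W ∈ l, IsClopen W ∧ W ∩ W⁻¹ = ∅) :
    IsClopen (build l) ∧ build l ∩ (build l)⁻¹ = ∅ ∧
      (∀ W ∈ l, W ⊆ build l ∪ (build l)⁻¹) ∧ build l ⊆ ⋃₀ {W | W ∈ l} := by
  induction l with
  | nil => exact ⟨isClopen_empty, by simp [build], by simp, by simp [build]⟩
  | cons W l ih =>
    obtain ⟨hWcl, hWd⟩ := h W (List.mem_cons_self)
    obtain ⟨hBcl, hBd, hBcov, hBsub⟩ := ih (fun V hV => h V (List.mem_cons_of_mem _ hV))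
    set B := build l with hB
    have hbuild : build (W :: l) = B ∪ (W \ (B ∪ B⁻¹)) := rfl
    rw [hbuild]
    set C := W \ (B ∪ B⁻¹) with hC
    have hcl : IsClopen (B ∪ C) := hBcl.union (hWcl.diff (hBcl.union hBcl.inv'))
    have hWdis : ∀ a : G, a ∈ W → a⁻¹ ∈ W → False := by
      intro a ha hai
      have : a ∈ W ∩ W⁻¹ := ⟨ha, Set.mem_inv.2 hai⟩
      rw [hWd] at this; exact this
    have hBdis : ∀ a : G, a ∈ B → a⁻¹ ∈ B → False := by
      intro a ha hai
      have : a ∈ B ∩ B⁻¹ := ⟨ha, Set.mem_inv.2 hai⟩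
      rw [hBd] at this; exact this
    refine ⟨hcl, ?_, ?_, ?_⟩
    · ext x
      simp only [mem_inter_iff, mem_empty_iff_false, iff_false, not_and]
      intro hx hxi
      rw [Set.mem_inv] at hxi
      rcases hx with hx | ⟨hxW, hxn⟩ <;> rcases hxi with hxi | ⟨hxiW, hxin⟩
      · exact hBdis x hx hxi
      · exact hxin (Or.inr (by rw [Set.mem_inv, inv_inv]; exact hx))
      · exact hxn (Or.inr (Set.mem_inv.2 hxi))
      · exact hWdis x hxW hxiW
    · intro V hV x hx
      rcases List.mem_cons.1 hV with rfl | hV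
      · by_cases hxB : x ∈ B ∪ B⁻¹
        · rcases hxB with h' | h'
          · exact Or.inl (Or.inl h')
          · exact Or.inr (Set.mem_inv.2 (Or.inl (Set.mem_inv.1 h')))
        · exact Or.inl (Or.inr ⟨hx, hxB⟩)
      · rcases hBcov V hV hx with h' | h'
        · exact Or.inl (Or.inl h')
        · exact Or.inr (Set.mem_inv.2 (Or.inl (Set.mem_inv.1 h')))
    · rintro x (hx | ⟨hx, -⟩)
      · obtain ⟨V, hV, hxV⟩ := hBsub hx
        exact ⟨V, List.mem_cons_of_mem _ hV, hxV⟩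
      · exact ⟨W, List.mem_cons_self, hx⟩

/-- Halving lemma: a symmetric compact clopen set avoiding fixed points of inversion
can be split into a clopen half. -/
lemma exists_half [T2Space G] [TotallyDisconnectedSpace G] [CompactSpace G]
    {K : Set G} (hKcl : IsClopen K) (hsymm : K⁻¹ = K)
    (hfree : ∀ x ∈ K, x⁻¹ ≠ x) :
    ∃ B : Set G, B ⊆ K ∧ IsClopen B ∧ B ∩ B⁻¹ = ∅ ∧ B ∪ B⁻¹ = K := by
  have hKc : IsCompact K := hKcl.1.isCompact
  -- for each x ∈ K, a clopen W x ∋ x with W x ∩ (W x)⁻¹ = ∅, W x ⊆ K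
  have key : ∀ x ∈ K, ∃ W : Set G, x ∈ W ∧ W ⊆ K ∧ IsClopen W ∧ W ∩ W⁻¹ = ∅ := by
    intro x hx
    obtain ⟨U, hUcl, hxU, hU⟩ := compact_exists_isClopen_in_isOpen
      (isOpen_compl_singleton (x := x⁻¹)) (fun h => hfree x hx (mem_singleton_iff.1 h).symm)
    refine ⟨(U ∩ K) \ (U ∩ K)⁻¹, ⟨⟨hxU, hx⟩, ?_⟩, fun y hy => hy.1.2, ?_, ?_⟩
    · intro h
      rw [Set.mem_inv] at h
      exact hU h.1 rfl
    · exact ((hUcl.inter hKcl).diff (hUcl.inter hKcl).inv')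
    · ext y
      simp only [mem_inter_iff, mem_diff, mem_empty_iff_false, iff_false, not_and]
      intro hy hyi
      rw [Set.mem_inv, Set.mem_diff] at hyi
      exact absurd (Set.mem_inv.2 hyi.1) hy.2
  choose! W hxW hWK hWcl hWd using key
  obtain ⟨t, ht⟩ := hKc.elim_finite_subcover (fun x : K => W (x : G))
    (fun x => (hWcl x x.2).2) (fun y hy => mem_iUnion.2 ⟨⟨y, hy⟩, hxW y hy⟩)
  set l : List (Set G) := t.toList.map (fun x : K => W (x : G)) with hl
  have hmem : ∀ V ∈ l, ∃ x : K, V = W x := by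
    intro V hV
    simp only [hl, List.mem_map] at hV
    obtain ⟨x, -, rfl⟩ := hV
    exact ⟨x, rfl⟩
  obtain ⟨hBcl, hBd, hBcov, hBsub⟩ := build_spec l (by
    intro V hV
    obtain ⟨x, rfl⟩ := hmem V hV
    exact ⟨hWcl x x.2, hWd x x.2⟩)
  refine ⟨build l, ?_, hBcl, hBd, ?_⟩
  · intro y hy
    obtain ⟨V, hV, hyV⟩ := hBsub hy
    obtain ⟨x, rfl⟩ := hmem V hV
    exact hWK x x.2 hyV
  · apply subset_antisymm
    · rintro y (hy | hy)
      · obtain ⟨V, hV, hyV⟩ := hBsub hy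
        obtain ⟨x, rfl⟩ := hmem V hV
        exact hWK x x.2 hyV
      · rw [Set.mem_inv] at hy
        obtain ⟨V, hV, hyV⟩ := hBsub hy
        obtain ⟨x, rfl⟩ := hmem V hV
        have : y⁻¹ ∈ K := hWK x x.2 hyV
        rw [← hsymm]; exact Set.mem_inv.2 this
    · intro y hy
      obtain ⟨x, hxt, hx⟩ := mem_iUnion₂.1 (ht hy)
      refine hBcov (W (x : G)) ?_ hx
      exact List.mem_map.2 ⟨x, Finset.mem_toList.2 hxt, rfl⟩

end Aux

/-- A topological group on a Cantor set admits a closed game subset iff it has no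
element of order two. -/
theorem cantor_group_closed_gameSubset_iff {G : Type*} [Group G] [TopologicalSpace G]
    [IsTopologicalGroup G] [CompactSpace G] [TopologicalSpace.MetrizableSpace G]
    [TotallyDisconnectedSpace G]
    (hperf : ∀ x : G, ¬ IsOpen ({x} : Set G)) :
    (∃ A : Set G, IsClosed A ∧ A ∩ A⁻¹ = {1} ∧ A ∪ A⁻¹ = Set.univ) ↔
      ¬ ∃ x : G, x ≠ 1 ∧ x * x = 1 := by
  letI := TopologicalSpace.metrizableSpaceMetric G
  constructor
  · rintro ⟨A, -, hAi, hAu⟩ ⟨x, hx1, hx2⟩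
    have hxinv : x⁻¹ = x := inv_eq_of_mul_eq_one_right hx2
    have hx : x ∈ A ∪ A⁻¹ := hAu ▸ mem_univ x
    have hxA : x ∈ A ∩ A⁻¹ := by
      rcases hx with h | h
      · exact ⟨h, Set.mem_inv.2 (by rw [hxinv]; exact h)⟩
      · have h2 := Set.mem_inv.1 h
        rw [hxinv] at h2
        exact ⟨h2, h⟩
    rw [hAi] at hxA
    exact hx1 hxA
  · intro hno
    have hfree : ∀ x : G, x ≠ 1 → x⁻¹ ≠ x := by
      intro x hx h
      refine hno ⟨x, hx, ?_⟩
      have h2 := mul_inv_cancel x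
      rwa [h] at h2
    -- countable antitone basis at 1
    obtain ⟨u, hu⟩ := (𝓝 (1 : G)).exists_antitone_basis
    have hC : ∀ n : ℕ, ∃ C : Set G, IsClopen C ∧ (1 : G) ∈ C ∧ C ⊆ u n := by
      intro n
      have hun : u n ∈ 𝓝 (1 : G) := hu.1.mem_of_mem trivial
      rw [mem_nhds_iff] at hun
      obtain ⟨V, hVu, hVo, hV1⟩ := hun
      obtain ⟨C, hCcl, hC1, hCV⟩ := compact_exists_isClopen_in_isOpen hVo hV1
      exact ⟨C, hCcl, hC1, hCV.trans hVu⟩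
    choose C hCcl hC1 hCu using hC
    -- decreasing symmetric clopen neighborhoods
    set V : ℕ → Set G := fun n => Nat.rec univ (fun n Vn => Vn ∩ (C n ∩ (C n)⁻¹)) n with hV
    have hVzero : V 0 = univ := rfl
    have hVsucc : ∀ n, V (n + 1) = V n ∩ (C n ∩ (C n)⁻¹) := fun n => rfl
    have hVcl : ∀ n, IsClopen (V n) := by
      intro n
      induction n with
      | zero => exact isClopen_univ
      | succ n ih => rw [hVsucc]; exact ih.inter ((hCcl n).inter (hCcl n).inv')
    have hV1 : ∀ n, (1 : G) ∈ V n := by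
      intro n
      induction n with
      | zero => exact mem_univ 1
      | succ n ih =>
        rw [hVsucc]
        exact ⟨ih, hC1 n, by rw [Set.mem_inv, inv_one]; exact hC1 n⟩
    have hVsymm : ∀ n, (V n)⁻¹ = V n := by
      intro n
      induction n with
      | zero => exact Set.inv_univ
      | succ n ih =>
        rw [hVsucc, Set.inter_inv, Set.inter_inv, ih, inv_inv, Set.inter_comm ((C n)⁻¹)]
    have hVstep : ∀ n, V (n + 1) ⊆ V n := by
      intro n
      rw [hVsucc]
      exact inter_subset_left
    have hVanti : ∀ m n, m ≤ n → V n ⊆ V m := by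
      intro m n hmn
      induction n with
      | zero => rw [Nat.le_zero.1 hmn]
      | succ n ih =>
        rcases Nat.lt_or_ge m (n + 1) with h | h
        · exact ((hVstep n).trans (ih (Nat.lt_succ_iff.1 h)))
        · rw [Nat.le_antisymm hmn h]
    have hVinter : ∀ x : G, (∀ n, x ∈ V n) → x = 1 := by
      intro x hx
      have hspec : x ⤳ (1 : G) := by
        rw [specializes_iff_pure]
        intro s hs
        rw [hu.1.mem_iff] at hs
        obtain ⟨i, -, hi⟩ := hs
        have hxi := hx (i + 1)
        rw [hVsucc i] at hxi
        exact hi (hCu i hxi.2.1)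
      exact hspec.eq
    -- the annuli
    set K : ℕ → Set G := fun n => V n \ V (n + 1) with hK
    have hKcl : ∀ n, IsClopen (K n) := fun n => (hVcl n).diff (hVcl (n + 1))
    have hVms : ∀ n (x : G), x ∈ V n ↔ x⁻¹ ∈ V n := by
      intro n x
      conv_lhs => rw [← hVsymm n]
      exact Set.mem_inv
    have hKsymm : ∀ n, (K n)⁻¹ = K n := by
      intro n
      ext x
      simp only [hK, Set.mem_inv, Set.mem_diff]
      rw [← hVms n x, ← hVms (n + 1) x]
    have hK1 : ∀ n, (1 : G) ∉ K n := fun n h => h.2 (hV1 (n + 1))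
    have hKdisj : ∀ m n, m ≠ n → ∀ x, x ∈ K m → x ∈ K n → False := by
      have key : ∀ m n, m < n → ∀ x, x ∈ K m → x ∈ K n → False := by
        intro m n hmn x hxm hxn
        exact hxm.2 (hVanti (m + 1) n hmn hxn.1)
      intro m n hmn x hxm hxn
      rcases Nat.lt_or_ge m n with h | h
      · exact key m n h x hxm hxn
      · exact key n m (lt_of_le_of_ne h (Ne.symm hmn)) x hxn hxm
    have hKcov : ∀ x : G, x ≠ 1 → ∃ n, x ∈ K n := by
      intro x hx
      have hex : ∃ n, x ∉ V n := by
        by_contra h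
        push_neg at h
        exact hx (hVinter x h)
      classical
      set n₀ := Nat.find hex with hn₀
      have hn₀pos : n₀ ≠ 0 := by
        intro h
        exact (Nat.find_spec hex) (by rw [← hn₀, h, hVzero]; exact mem_univ x)
      obtain ⟨m, hm⟩ : ∃ m, n₀ = m + 1 := ⟨n₀ - 1, by omega⟩
      refine ⟨m, ?_, ?_⟩
      · by_contra h
        have hle : n₀ ≤ m := Nat.find_le h
        omega
      · rw [hm] at hn₀; rw [hn₀]; exact Nat.find_spec hex
    -- halve each annulus
    have hhalf : ∀ n, ∃ B : Set G, B ⊆ K n ∧ IsClopen B ∧ B ∩ B⁻¹ = ∅ ∧ B ∪ B⁻¹ = K n := by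
      intro n
      exact exists_half (hKcl n) (hKsymm n)
        (fun x hx => hfree x (fun h => hK1 n (h ▸ hx)))
    choose B hBK hBcl hBd hBu using hhalf
    have hBdis : ∀ n x, x ∈ B n → x ∈ (B n)⁻¹ → False := by
      intro n x h h'
      have : x ∈ B n ∩ (B n)⁻¹ := ⟨h, h'⟩
      rw [hBd n] at this; exact this
    have hBinvK : ∀ n, (B n)⁻¹ ⊆ K n := by
      intro n x hx
      rw [← hBu n]; exact Or.inr hx
    refine ⟨{1} ∪ ⋃ n, B n, ?_, ?_, ?_⟩
    · -- closedness: complement is ⋃ n, (B n)⁻¹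
      have hcompl : ({1} ∪ ⋃ n, B n)ᶜ = ⋃ n, (B n)⁻¹ := by
        ext x
        simp only [mem_compl_iff, mem_union, mem_singleton_iff, mem_iUnion, not_or, not_exists]
        constructor
        · rintro ⟨hx1, hxB⟩
          obtain ⟨n, hn⟩ := hKcov x hx1
          rw [← hBu n] at hn
          rcases hn with h | h
          · exact absurd h (hxB n)
          · exact ⟨n, h⟩
        · rintro ⟨n, hn⟩
          have hxK : x ∈ K n := hBinvK n hn
          refine ⟨fun h => hK1 n (h ▸ hxK), fun m hm => ?_⟩
          have : m = n := by
            by_contra hmn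
            exact hKdisj m n hmn x (hBK m hm) hxK
          exact hBdis n x (this ▸ hm) hn
      rw [← isOpen_compl_iff, hcompl]
      exact isOpen_iUnion (fun n => (hBcl n).inv'.2)
    · -- A ∩ A⁻¹ = {1}
      apply subset_antisymm
      · rintro x ⟨hx, hxi⟩
        rw [Set.mem_inv] at hxi
        rcases hx with hx | hx
        · exact hx
        · rcases hxi with hxi | hxi
          · rw [mem_singleton_iff] at hxi ⊢
            rw [← inv_inv x, hxi, inv_one]
          · rw [mem_iUnion] at hx hxi
            obtain ⟨n, hn⟩ := hx
            obtain ⟨m, hm⟩ := hxi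
            have hxKn : x ∈ K n := hBK n hn
            have hxKm : x ∈ K m := hBinvK m (Set.mem_inv.2 hm)
            have : m = n := by
              by_contra hmn
              exact hKdisj m n hmn x hxKm hxKn
            exact (hBdis n x hn (Set.mem_inv.2 (this ▸ hm))).elim
      · intro x hx
        rw [mem_singleton_iff] at hx
        subst hx
        exact ⟨Or.inl rfl, Set.mem_inv.2 (by rw [inv_one]; exact Or.inl rfl)⟩
    · -- A ∪ A⁻¹ = univ
      ext x
      simp only [mem_union, mem_univ, iff_true]
      by_cases hx1 : x = 1
      · exact Or.inl (Or.inl (by rw [hx1]; rfl))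
      · obtain ⟨n, hn⟩ := hKcov x hx1
        rw [← hBu n] at hn
        rcases hn with h | h
        · exact Or.inl (Or.inr (mem_iUnion.2 ⟨n, h⟩))
        · refine Or.inr (Set.mem_inv.2 (Or.inr (mem_iUnion.2 ⟨n, Set.mem_inv.1 h⟩)))
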